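/- Let a, a' ∈ ℂ((z))[[λ]] satisfy z·a ∈ ℂ[[z,λ]], z·a' ∈ ℂ[[z,λ]], res_{z=0} a = res_{z=0} a' = −λ/2, and a(z,0) = a'(z,0). Then there exists a unit r of ℂ[[z,λ]] such that a' = a + λ·r⁻¹·(dr/dz). -/

import Mathlib

open PowerSeries

noncomputable section

/-- `K = ℂ((z))`, the field of formal Laurent series. -/
abbrev K : Type := LaurentSeries ℂ

/-- The formal derivative `d/dz` on Laurent series. -/
def lD (f : K) : K where
  coeff n := ((n : ℂ) + 1) * f.coeff (n + 1)
  isPWO_support' := by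
    apply Set.IsPWO.mono ((f.isPWO_support).image_of_monotone
      (f := fun m : ℤ => m - 1) (fun a b hab => by simpa using hab))
    intro n hn
    refine ⟨n + 1, ?_, by ring⟩
    intro h0
    apply hn
    simp [h0]

/-- `ℂ[[z]]` viewed as a subring of `ℂ((z))`. -/
def Oz : Subring K := (HahnSeries.ofPowerSeries ℤ ℂ).range

/-- `h ∈ ℂ[[z]]` has a simple zero at `z = 0`. -/
def SimpleZero (h : PowerSeries ℂ) : Prop :=
  PowerSeries.coeff (R := ℂ) 0 h = 0 ∧ PowerSeries.coeff (R := ℂ) 1 h ≠ 0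

/-- `K̂ = ℂ((z))[[λ]]`, formal power series in `λ` with Laurent series coefficients. -/
abbrev Khat : Type := PowerSeries K

/-- The `λ`-coefficientwise formal derivative `d/dz` on `ℂ((z))[[λ]]`. -/
def pD (F : Khat) : Khat := PowerSeries.mk fun i => lD (PowerSeries.coeff (R := K) i F)

/-- `F ∈ ℂ[[z,λ]]`: every `λ`-coefficient of `F` lies in `ℂ[[z]]`. -/
def MemOhat (F : Khat) : Prop := ∀ i, PowerSeries.coeff (R := K) i F ∈ Oz

/-- The `λ`-gauge transform `Gauge_λ(A,R) = R⁻¹AR + λ·R⁻¹·(dR/dz)`. -/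
def lamGauge (A R : Matrix (Fin 2) (Fin 2) Khat) : Matrix (Fin 2) (Fin 2) Khat :=
  R⁻¹ * A * R + (PowerSeries.X : Khat) • (R⁻¹ * R.map pD)

/-- The constant term in `λ`: `F(z,0)`. -/
def ev0 : Khat →+* K := PowerSeries.constantCoeff (R := K)

/-- The residue of a Laurent series: the coefficient of `z⁻¹`. -/
def res (f : K) : ℂ := f.coeff (-1)

/-- The residue of an element of `ℂ((z))[[λ]]`, an element of `ℂ[[λ]]`. -/
def resHat (F : Khat) : PowerSeries ℂ := PowerSeries.mk fun i => res (PowerSeries.coeff (R := K) i F)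

/-- The Laurent series `z`. -/
def zK : K := HahnSeries.ofPowerSeries ℤ ℂ PowerSeries.X

/-- `-λ/2` as an element of `ℂ[[λ]]`. -/
def negHalfLam : PowerSeries ℂ := -(PowerSeries.C (R := ℂ) (1 / 2) * PowerSeries.X)

abbrev oPS : PowerSeries ℂ →+* K := HahnSeries.ofPowerSeries ℤ ℂ

lemma coeff_derivativeFun' (f : PowerSeries ℂ) (n : ℕ) :
    PowerSeries.coeff (R := ℂ) n f.derivativeFun = PowerSeries.coeff (R := ℂ) (n + 1) f * (n + 1) :=
  PowerSeries.coeff_derivative f n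

lemma coeff_oPS_neg (x : PowerSeries ℂ) {n : ℤ} (hn : n < 0) : (oPS x).coeff n = 0 := by
  rw [HahnSeries.ofPowerSeries_apply]
  apply HahnSeries.embDomain_notin_range
  rintro ⟨m, hm⟩
  have hm' : (m : ℤ) = n := hm
  omega

lemma mem_Oz_of_coeff (f : K) (h : ∀ n : ℤ, n < 0 → f.coeff n = 0) : f ∈ Oz := by
  refine ⟨PowerSeries.mk (fun n => f.coeff n), ?_⟩
  ext n
  rcases le_or_gt 0 n with hn | hn
  · lift n to ℕ using hn
    rw [HahnSeries.ofPowerSeries_apply_coeff, PowerSeries.coeff_mk]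
  · rw [coeff_oPS_neg _ hn, h n hn]

lemma Oz_coeff_neg {f : K} (hf : f ∈ Oz) {n : ℤ} (hn : n < 0) : f.coeff n = 0 := by
  obtain ⟨x, rfl⟩ := hf
  exact coeff_oPS_neg x hn

lemma lD_coeff (f : K) (n : ℤ) : (lD f).coeff n = ((n : ℂ) + 1) * f.coeff (n + 1) := rfl

lemma lD_oPS (x : PowerSeries ℂ) : lD (oPS x) = oPS x.derivativeFun := by
  ext n
  rcases le_or_gt 0 n with hn | hn
  · lift n to ℕ using hn
    rw [lD_coeff, HahnSeries.ofPowerSeries_apply_coeff]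
    have : ((n : ℤ) + 1) = ((n + 1 : ℕ) : ℤ) := by push_cast; ring
    rw [this, HahnSeries.ofPowerSeries_apply_coeff, coeff_derivativeFun']
    push_cast
    ring
  · rw [coeff_oPS_neg _ hn, lD_coeff]
    rcases eq_or_lt_of_le (Int.lt_iff_add_one_le.mp hn) with h1 | h1
    · have : ((n : ℂ) + 1) = 0 := by
        have : n = -1 := by omega
        simp [this]
      rw [this, zero_mul]
    · rw [coeff_oPS_neg _ (by omega), mul_zero]

lemma zK_mul_coeff (f : K) (n : ℤ) : (zK * f).coeff (n + 1) = f.coeff n := by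
  rw [zK, HahnSeries.ofPowerSeries_X, HahnSeries.coeff_single_mul_add, one_mul]

/-- the solution coefficients of the formal ODE `r' = g·r`, `r(0,λ)=1`. -/
def solC (gc : ℕ → ℕ → ℂ) : ℕ → ℕ → ℂ
  | 0, i => if i = 0 then 1 else 0
  | (n+1), i => ((n : ℂ) + 1)⁻¹ *
      ∑ p ∈ Finset.HasAntidiagonal.antidiagonal i, ∑ k ∈ Finset.range (n+1),
        gc k p.1 * solC gc (n - k) p.2
  decreasing_by exact Nat.lt_succ_of_le (Nat.sub_le n k)

lemma solR_deriv (gc : ℕ → ℕ → ℂ) (G : ℕ → PowerSeries ℂ)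
    (hG : ∀ k j, PowerSeries.coeff (R := ℂ) k (G j) = gc k j) (i : ℕ) :
    (PowerSeries.mk fun n => solC gc n i).derivativeFun =
      ∑ p ∈ Finset.HasAntidiagonal.antidiagonal i, G p.1 * PowerSeries.mk (fun n => solC gc n p.2) := by
  ext n
  rw [coeff_derivativeFun', PowerSeries.coeff_mk, solC, map_sum]
  have hne : ((n : ℂ) + 1) ≠ 0 := by
    have h1 : ((n + 1 : ℕ) : ℂ) ≠ 0 := Nat.cast_ne_zero.mpr (Nat.succ_ne_zero n)
    push_cast at h1
    exact h1
  rw [mul_comm, mul_inv_cancel_left₀ hne]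
  refine Finset.sum_congr rfl fun p _ => ?_
  rw [PowerSeries.coeff_mul, Finset.Nat.sum_antidiagonal_eq_sum_range_succ_mk]
  refine Finset.sum_congr rfl fun k _ => ?_
  rw [hG, PowerSeries.coeff_mk]


/-- If `a, a' ∈ ℂ((z))[[λ]]` both satisfy `z·a, z·a' ∈ ℂ[[z,λ]]`,
`res a = res a' = -λ/2` and `a(z,0) = a'(z,0)`, then `a' = a + λ·r⁻¹·(dr/dz)` for some
unit `r` of `ℂ[[z,λ]]`. -/
theorem stmt11 (a a' : Khat)
    (ha : MemOhat (PowerSeries.C (R := K) zK * a)) (ha' : MemOhat (PowerSeries.C (R := K) zK * a'))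
    (hres : resHat a = negHalfLam) (hres' : resHat a' = negHalfLam)
    (h0 : ev0 a = ev0 a') :
    ∃ r : Khat, MemOhat r ∧ (∃ s : Khat, MemOhat s ∧ r * s = 1) ∧
      a' = a + PowerSeries.X * (r⁻¹ * pD r) := by
  set b : Khat := a' - a with hbdef
  have hresb : ∀ i, res (PowerSeries.coeff (R := K) i b) = 0 := by
    intro i
    have h1 : res (PowerSeries.coeff (R := K) i a) = res (PowerSeries.coeff (R := K) i a') := by
      have := congrArg (PowerSeries.coeff (R := ℂ) i) (hres.trans hres'.symm)
      simpa [resHat] using this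
    simp only [hbdef, map_sub, res, HahnSeries.coeff_sub, Pi.sub_apply]
    rw [← res, ← res, h1, sub_self]
  have hbO : ∀ i, PowerSeries.coeff (R := K) i b ∈ Oz := by
    intro i
    apply mem_Oz_of_coeff
    intro n hn
    rcases eq_or_lt_of_le (Int.lt_iff_add_one_le.mp hn) with h1 | h1
    · have hn1 : n = -1 := by omega
      rw [hn1]
      exact hresb i
    · have hmem : PowerSeries.coeff (R := K) i (PowerSeries.C (R := K) zK * b) ∈ Oz := by
        have : PowerSeries.C (R := K) zK * b
            = PowerSeries.C (R := K) zK * a' - PowerSeries.C (R := K) zK * a := by ring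
        rw [this, map_sub]
        exact Subring.sub_mem _ (ha' i) (ha i)
      have h2 : (PowerSeries.coeff (R := K) i b).coeff n
          = (PowerSeries.coeff (R := K) i (PowerSeries.C (R := K) zK * b)).coeff (n + 1) := by
        rw [PowerSeries.coeff_C_mul, zK_mul_coeff]
      rw [h2]
      exact Oz_coeff_neg hmem (by omega)
  have hb0 : PowerSeries.constantCoeff (R := K) b = 0 := by
    simp only [hbdef, map_sub]
    rw [show (PowerSeries.constantCoeff (R := K)) a' = ev0 a' from rfl,
        show (PowerSeries.constantCoeff (R := K)) a = ev0 a from rfl, ← h0, sub_self]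
  set g : Khat := PowerSeries.mk fun i => PowerSeries.coeff (R := K) (i + 1) b with hgdef
  have hXg : PowerSeries.X * g = b := by
    ext i
    cases i with
    | zero => rw [PowerSeries.coeff_zero_X_mul, PowerSeries.coeff_zero_eq_constantCoeff, hb0]
    | succ n => rw [PowerSeries.coeff_succ_X_mul, hgdef, PowerSeries.coeff_mk]
  have hgO : ∀ i, PowerSeries.coeff (R := K) i g ∈ Oz := by
    intro i
    rw [hgdef, PowerSeries.coeff_mk]
    exact hbO (i + 1)
  set gc : ℕ → ℕ → ℂ := fun n i => (PowerSeries.coeff (R := K) i g).coeff (n : ℤ) with hgcdef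
  set G : ℕ → PowerSeries ℂ := fun i => PowerSeries.mk fun n => gc n i with hGdef
  have hG : ∀ k j, PowerSeries.coeff (R := ℂ) k (G j) = gc k j := fun k j => PowerSeries.coeff_mk _ _
  have hGg : ∀ i, oPS (G i) = PowerSeries.coeff (R := K) i g := by
    intro i
    obtain ⟨x, hx⟩ := hgO i
    have hxG : G i = x := by
      ext n
      rw [hG, hgcdef]
      simp only [← hx, HahnSeries.ofPowerSeries_apply_coeff]
    rw [hxG, hx]
  set R : ℕ → PowerSeries ℂ := fun i => PowerSeries.mk fun n => solC gc n i with hRdef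
  set r : Khat := PowerSeries.mk fun i => oPS (R i) with hrdef
  have hrG : ∀ i, PowerSeries.coeff (R := K) i r = oPS (R i) := fun i => PowerSeries.coeff_mk _ _
  have hpDr : pD r = g * r := by
    refine PowerSeries.ext fun i => ?_
    rw [pD, PowerSeries.coeff_mk, hrG, lD_oPS, PowerSeries.coeff_mul]
    rw [show (R i).derivativeFun = ∑ p ∈ Finset.HasAntidiagonal.antidiagonal i, G p.1 * R p.2 from
      solR_deriv gc G hG i]
    rw [map_sum oPS (fun p => G p.1 * R p.2) (Finset.HasAntidiagonal.antidiagonal i)]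
    refine Finset.sum_congr rfl fun p _ => ?_
    rw [map_mul, hGg p.1, hrG]
  -- units
  set rt : PowerSeries (PowerSeries ℂ) := PowerSeries.mk R with hrtdef
  have hunit : IsUnit rt := by
    rw [PowerSeries.isUnit_iff_constantCoeff]
    have h1 : PowerSeries.constantCoeff rt = R 0 := PowerSeries.constantCoeff_mk
    rw [h1, PowerSeries.isUnit_iff_constantCoeff]
    have h2 : PowerSeries.constantCoeff (R := ℂ) (R 0) = solC gc 0 0 := PowerSeries.constantCoeff_mk
    have h3 : solC gc 0 0 = 1 := by rw [solC]; simp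
    rw [h2, h3]
    exact isUnit_one
  obtain ⟨u, hu⟩ := hunit
  set s : Khat := PowerSeries.map (oPS : PowerSeries ℂ →+* K) ((u⁻¹ : (PowerSeries ℂ)⟦X⟧ˣ) : (PowerSeries ℂ)⟦X⟧) with hsdef
  have hrmap : r = PowerSeries.map (oPS : PowerSeries ℂ →+* K) rt := by
    ext i
    rw [hrG, PowerSeries.coeff_map, hrtdef, PowerSeries.coeff_mk]
  have hrs : r * s = 1 := by
    rw [hrmap, hsdef, ← map_mul, ← hu, Units.mul_inv, map_one]
  have hsO : MemOhat s := by
    intro i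
    rw [hsdef, PowerSeries.coeff_map]
    exact ⟨_, rfl⟩
  have hrO : MemOhat r := by
    intro i
    rw [hrG]
    exact ⟨_, rfl⟩
  have hc0 : PowerSeries.constantCoeff (R := K) r ≠ 0 := by
    intro h
    have h1 : (PowerSeries.coeff (R := K) 0 r).coeff ((0 : ℕ) : ℤ) = 1 := by
      rw [hrG, HahnSeries.ofPowerSeries_apply_coeff]
      have h2 : PowerSeries.coeff (R := ℂ) 0 (R 0) = solC gc 0 0 := by
        simp only [hRdef]; exact PowerSeries.coeff_mk _ _
      rw [h2, solC]; simp
    rw [PowerSeries.coeff_zero_eq_constantCoeff, h] at h1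
    simp at h1
  have hrinv : r⁻¹ = s := by
    rw [PowerSeries.inv_eq_iff_mul_eq_one hc0, mul_comm]
    exact hrs
  refine ⟨r, hrO, ⟨s, hsO, hrs⟩, ?_⟩
  rw [hrinv, hpDr]
  have : PowerSeries.X * (s * (g * r)) = PowerSeries.X * g * (r * s) := by ring
  rw [this, hrs, mul_one, hXg, hbdef]
  ring


end
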